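/- Suppose q on a finite product space satisfies the strengthened approximate tensorization inequality D_KL(p,q) ≤ C Σ_i E_{X_{∼i}∼p}[TV²(p(X_i|X_{∼i}), q(X_i|X_{∼i}))] for all p. Then on the hypercube {±1}^d, D_KL(p,q) ≤ C (M_p(q) − M_p(p)), where M_p is the ratio matching objective M_p(q) = Σ_i E_{X∼p}[(1(X_i=+1) − q(X_i=+1|X_{∼i}))²]. -/

import Mathlib

noncomputable section

/-- Conditional probability `q(X_i = +1 | X_{∼i})` on the hypercube (`true` is `+1`). -/
def condTrue {d : ℕ} (q : (Fin d → Bool) → ℝ) (i : Fin d) (x : Fin d → Bool) : ℝ :=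
  q (Function.update x i true) /
    (q (Function.update x i true) + q (Function.update x i false))

/-- Ratio matching objective `M_p(q) = Σ_i E_{X∼p}[(1(X_i=+1) − q(X_i=+1|X_{∼i}))²]`. -/
def ratioMatch {d : ℕ} (p q : (Fin d → Bool) → ℝ) : ℝ :=
  ∑ i : Fin d, ∑ x : Fin d → Bool,
    p x * ((if x i then (1 : ℝ) else 0) - condTrue q i x) ^ 2

/-- Discrete KL divergence. -/
def KLdiv {d : ℕ} (p q : (Fin d → Bool) → ℝ) : ℝ :=
  ∑ x : Fin d → Bool, p x * Real.log (p x / q x)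

lemma condTrue_flip {d : ℕ} (p : (Fin d → Bool) → ℝ) (i : Fin d) (x : Fin d → Bool) (b : Bool) :
    condTrue p i (Function.update x i b) = condTrue p i x := by
  simp [condTrue, Function.update_idem]

lemma cross_zero {d : ℕ} (p q : (Fin d → Bool) → ℝ) (i : Fin d)
    (hpmarg : ∀ (x : Fin d → Bool),
      0 < p (Function.update x i true) + p (Function.update x i false)) :
    ∑ x : Fin d → Bool,
      p x * (((if x i then (1 : ℝ) else 0) - condTrue p i x)
        * (condTrue p i x - condTrue q i x)) = 0 := by
  set F : (Fin d → Bool) → ℝ := fun x =>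
    p x * (((if x i then (1 : ℝ) else 0) - condTrue p i x)
      * (condTrue p i x - condTrue q i x)) with hF
  have hinv : Function.Involutive (fun x : Fin d → Bool => Function.update x i (!x i)) := by
    intro x
    ext j
    by_cases h : j = i <;> simp [Function.update, h]
  have hsum : ∑ x : Fin d → Bool, F (Function.update x i (!x i)) = ∑ x : Fin d → Bool, F x :=
    Function.Bijective.sum_comp hinv.bijective F
  have hpair : ∀ x : Fin d → Bool, F x + F (Function.update x i (!x i)) = 0 := by
    intro x
    have hs := hpmarg x
    have hne : p (Function.update x i true) + p (Function.update x i false) ≠ 0 := ne_of_gt hs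
    have hcp : condTrue p i x = p (Function.update x i true) /
        (p (Function.update x i true) + p (Function.update x i false)) := rfl
    cases hxi : x i with
    | true =>
      have hx : Function.update x i true = x := by
        rw [← hxi]; exact Function.update_eq_self i x
      simp only [hF, hxi, Bool.not_true, condTrue_flip, Function.update_self, if_true,
        if_false, hcp, hx, Bool.false_eq_true]
      rw [hx] at hne
      field_simp
      ring
    | false =>
      have hx : Function.update x i false = x := by
        rw [← hxi]; exact Function.update_eq_self i x
      simp only [hF, hxi, Bool.not_false, condTrue_flip, Function.update_self, if_true,
        if_false, hcp, hx, Bool.false_eq_true]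
      rw [hx] at hne
      field_simp
      ring
  have h1 : ∑ x : Fin d → Bool, (F x + F (Function.update x i (!x i))) = 0 :=
    Finset.sum_eq_zero fun x _ => hpair x
  rw [Finset.sum_add_distrib, hsum] at h1
  linarith

/-- Suppose `q > 0` on `{±1}^d` satisfies the strengthened approximate tensorization
inequality `D_KL(p,q) ≤ C Σ_i E_{X∼p}[TV²(p(X_i|X_{∼i}), q(X_i|X_{∼i}))]` for all `p`
(here `TV(μ,ν) = |μ(+1) − ν(+1)|` for distributions on `{±1}`). Then
`D_KL(p,q) ≤ C (M_p(q) − M_p(p))` for the ratio matching objective `M_p`. -/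
theorem strong_at_implies_ratio_matching_bound {d : ℕ}
    (q : (Fin d → Bool) → ℝ) (hq0 : ∀ x, 0 < q x)
    (hq1 : ∑ x : Fin d → Bool, q x = 1)
    (C : ℝ)
    (hAT2 : ∀ p : (Fin d → Bool) → ℝ, (∀ x, 0 ≤ p x) →
      (∑ x : Fin d → Bool, p x = 1) →
      (∀ (i : Fin d) (x : Fin d → Bool),
        0 < p (Function.update x i true) + p (Function.update x i false)) →
      KLdiv p q ≤ C * ∑ i : Fin d, ∑ x : Fin d → Bool,
        p x * (condTrue p i x - condTrue q i x) ^ 2)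
    (p : (Fin d → Bool) → ℝ) (hp0 : ∀ x, 0 ≤ p x)
    (hp1 : ∑ x : Fin d → Bool, p x = 1)
    (hpmarg : ∀ (i : Fin d) (x : Fin d → Bool),
      0 < p (Function.update x i true) + p (Function.update x i false)) :
    KLdiv p q ≤ C * (ratioMatch p q - ratioMatch p p) := by
  have key : ∑ i : Fin d, ∑ x : Fin d → Bool,
      p x * (condTrue p i x - condTrue q i x) ^ 2 = ratioMatch p q - ratioMatch p p := by
    unfold ratioMatch
    rw [← Finset.sum_sub_distrib]
    refine Finset.sum_congr rfl fun i _ => ?_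
    have hc := cross_zero p q i (hpmarg i)
    have hexp : ∑ x : Fin d → Bool,
        (p x * ((if x i then (1 : ℝ) else 0) - condTrue q i x) ^ 2
          - p x * ((if x i then (1 : ℝ) else 0) - condTrue p i x) ^ 2
          - p x * (condTrue p i x - condTrue q i x) ^ 2)
        = ∑ x : Fin d → Bool, 2 * (p x * (((if x i then (1 : ℝ) else 0) - condTrue p i x)
            * (condTrue p i x - condTrue q i x))) :=
      Finset.sum_congr rfl fun x _ => by ring
    rw [← Finset.mul_sum, hc, mul_zero, Finset.sum_sub_distrib, Finset.sum_sub_distrib] at hexp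
    linarith
  rw [← key]
  exact hAT2 p hp0 hp1 hpmarg

end
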